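/- Let k be a field and let a₀, …, a_d be d+1 distinct elements of k. Define T = { (aᵢ, aⱼ) : 0 ≤ j ≤ i ≤ d } ⊆ k². If Q(x,y) is a polynomial over k of total degree at most d that vanishes at every point of T, then Q = 0. -/

import Mathlib

open MvPolynomial

namespace Stmt2Aux

variable {k : Type*} [Field k]

/-- The canonical map from `MvPolynomial (Fin 1) k` to `Polynomial k`. -/
noncomputable def φ : MvPolynomial (Fin 1) k →ₐ[k] Polynomial k :=
  MvPolynomial.aeval (fun _ => Polynomial.X)

lemma φ_injective : Function.Injective (φ (k := k)) := by
  have h : ∀ p : MvPolynomial (Fin 1) k,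
      Polynomial.aeval (X 0 : MvPolynomial (Fin 1) k) (φ p) = p := by
    have h2 : (Polynomial.aeval (X (0 : Fin 1) : MvPolynomial (Fin 1) k)).comp φ
        = AlgHom.id k (MvPolynomial (Fin 1) k) := by
      apply MvPolynomial.algHom_ext
      intro i
      have hi : i = 0 := Subsingleton.elim _ _
      subst hi
      simp [φ]
    intro p
    exact DFunLike.congr_fun h2 p
  intro p q hpq
  rw [← h p, ← h q, hpq]

lemma natDegree_φ_le (p : MvPolynomial (Fin 1) k) : (φ p).natDegree ≤ p.totalDegree := by
  rw [φ, aeval_def, eval₂_eq]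
  apply Polynomial.natDegree_sum_le_of_forall_le
  intro m hm
  refine (Polynomial.natDegree_mul_le).trans ?_
  have h1 : (algebraMap k (Polynomial k) (coeff m p)).natDegree = 0 := by
    simp [Polynomial.algebraMap_eq]
  have h2 : (∏ i ∈ m.support, (Polynomial.X : Polynomial k) ^ m i).natDegree
      ≤ ∑ i ∈ m.support, m i := by
    refine (Polynomial.natDegree_prod_le _ _).trans ?_
    apply Finset.sum_le_sum
    intro i _
    simpa using Polynomial.natDegree_pow_le (p := (Polynomial.X : Polynomial k)) (n := m i)
  have h3 : ∑ i ∈ m.support, m i ≤ p.totalDegree := le_totalDegree hm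
  omega

lemma eval_φ (q : MvPolynomial (Fin 1) k) (b : k) :
    Polynomial.eval b (φ q) = MvPolynomial.eval (fun _ => b) q := by
  have h : (Polynomial.evalRingHom b).comp (φ.toRingHom : MvPolynomial (Fin 1) k →+* Polynomial k)
      = (MvPolynomial.eval (fun _ : Fin 1 => b) : MvPolynomial (Fin 1) k →+* k) := by
    apply MvPolynomial.ringHom_ext <;> simp [φ]
  exact DFunLike.congr_fun h q

lemma eval_evalC (Q : MvPolynomial (Fin 2) k) (c b : k) :
    Polynomial.eval b (φ (Polynomial.eval (MvPolynomial.C c) (finSuccEquiv k 1 Q)))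
      = MvPolynomial.eval ![c, b] Q := by
  have h1 : (![c, b] : Fin 2 → k) = Fin.cons c (fun _ => b) := by
    funext i; fin_cases i <;> rfl
  rw [h1, eval_eq_eval_mv_eval']
  have h : (((Polynomial.evalRingHom b).comp
        (φ.toRingHom : MvPolynomial (Fin 1) k →+* Polynomial k)).comp
        (Polynomial.evalRingHom (MvPolynomial.C c)))
      = (Polynomial.evalRingHom c).comp
        (Polynomial.mapRingHom (MvPolynomial.eval (fun _ : Fin 1 => b))) := by
    apply Polynomial.ringHom_ext
    · intro q; simp [eval_φ]
    · simp [φ, eval_φ]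
  exact DFunLike.congr_fun h (finSuccEquiv k 1 Q)

lemma totalDegree_factor {c : k} {R : MvPolynomial (Fin 2) k} (hR : R ≠ 0) :
    R.totalDegree + 1 ≤ ((MvPolynomial.X 0 - MvPolynomial.C c) * R).totalDegree := by
  obtain ⟨m, hm, hdeg⟩ := Finset.exists_mem_eq_sup R.support
    (MvPolynomial.support_nonempty.mpr hR) (fun s => s.sum fun _ e => e)
  have hcoeff : coeff (Finsupp.single 0 1 + m) ((MvPolynomial.X 0 - MvPolynomial.C c) * R)
      = coeff m R := by
    rw [sub_mul, coeff_sub, coeff_X_mul, coeff_C_mul]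
    have hz : coeff (Finsupp.single 0 1 + m) R = 0 := by
      by_contra h
      have hmem : (Finsupp.single 0 1 + m) ∈ R.support := mem_support_iff.mpr h
      have := le_totalDegree hmem
      rw [Finsupp.sum_add_index' (fun _ => rfl) (fun _ _ _ => rfl)] at this
      simp only [Finsupp.sum_single_index] at this
      rw [MvPolynomial.totalDegree, hdeg] at this
      omega
    rw [hz, mul_zero, sub_zero]
  have hne : coeff m R ≠ 0 := mem_support_iff.mp hm
  have hmem : (Finsupp.single 0 1 + m) ∈ ((MvPolynomial.X 0 - MvPolynomial.C c) * R).support :=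
    mem_support_iff.mpr (by rw [hcoeff]; exact hne)
  have := le_totalDegree hmem
  rw [Finsupp.sum_add_index' (fun _ => rfl) (fun _ _ _ => rfl)] at this
  simp only [Finsupp.sum_single_index] at this
  rw [MvPolynomial.totalDegree, hdeg]
  omega

lemma key : ∀ d : ℕ, ∀ a : Fin (d + 1) → k, Function.Injective a →
    ∀ Q : MvPolynomial (Fin 2) k, Q.totalDegree ≤ d →
    (∀ i j : Fin (d + 1), j ≤ i → MvPolynomial.eval ![a i, a j] Q = 0) → Q = 0 := by
  intro d
  induction d with
  | zero =>
    intro a ha Q hdeg hvan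
    have h0 : Q.totalDegree = 0 := Nat.le_zero.mp hdeg
    have hC : Q = MvPolynomial.C (MvPolynomial.coeff 0 Q) := by
      ext m
      by_cases hm : m = 0
      · subst hm; simp
      · rw [MvPolynomial.coeff_C, if_neg (Ne.symm hm)]
        by_contra h
        have hms : m ∈ Q.support := MvPolynomial.mem_support_iff.mpr h
        have hall := (MvPolynomial.totalDegree_eq_zero_iff _ Q).mp h0 m hms
        exact hm (Finsupp.ext fun x => hall x)
    have hv := hvan 0 0 le_rfl
    rw [hC] at hv ⊢
    simp only [eval_C] at hv
    rw [hv, map_zero]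
  | succ d IH =>
    intro a ha Q hdeg hvan
    set c := a (Fin.last (d + 1)) with hc
    set F := MvPolynomial.finSuccEquiv k 1 Q with hF
    have htd : (Polynomial.eval (MvPolynomial.C c) F).totalDegree ≤ Q.totalDegree := by
      rw [Polynomial.eval_eq_sum_range]
      refine (MvPolynomial.totalDegree_finset_sum _ _).trans (Finset.sup_le ?_)
      intro i _
      refine (MvPolynomial.totalDegree_mul _ _).trans ?_
      by_cases h : F.coeff i = 0
      · have h2 : ((MvPolynomial.C c : MvPolynomial (Fin 1) k) ^ i).totalDegree = 0 := by
          rw [← map_pow, totalDegree_C]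
        rw [h, totalDegree_zero, h2]
        omega
      · have h1 := MvPolynomial.totalDegree_coeff_finSuccEquiv_add_le Q i (by rwa [← hF])
        have h2 : ((MvPolynomial.C c : MvPolynomial (Fin 1) k) ^ i).totalDegree = 0 := by
          rw [← map_pow, totalDegree_C]
        rw [← hF] at h1
        omega
    have hp1 : Polynomial.eval (MvPolynomial.C c) F = 0 := by
      apply φ_injective
      rw [map_zero]
      apply Polynomial.eq_zero_of_natDegree_lt_card_of_eval_eq_zero _ ha
      · intro j
        rw [hF, eval_evalC]
        exact hvan (Fin.last (d + 1)) j (Fin.le_last j)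
      · have hle : (φ (Polynomial.eval (MvPolynomial.C c) F)).natDegree ≤ d + 1 :=
          (natDegree_φ_le _).trans (htd.trans hdeg)
        rw [Fintype.card_fin]
        omega
    have hdvd : (Polynomial.X - Polynomial.C (MvPolynomial.C c)) ∣ F :=
      Polynomial.dvd_iff_isRoot.mpr hp1
    obtain ⟨G, hG⟩ := hdvd
    set R := (MvPolynomial.finSuccEquiv k 1).symm G with hR
    have hXC : (MvPolynomial.finSuccEquiv k 1) (MvPolynomial.X 0 - MvPolynomial.C c)
        = Polynomial.X - Polynomial.C (MvPolynomial.C c) := by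
      rw [map_sub, MvPolynomial.finSuccEquiv_X_zero]
      congr 1
      simp [MvPolynomial.finSuccEquiv_apply]
    have hQ : Q = (MvPolynomial.X 0 - MvPolynomial.C c) * R := by
      apply (MvPolynomial.finSuccEquiv k 1).injective
      rw [map_mul, hXC, hR, AlgEquiv.apply_symm_apply, ← hF]
      exact hG
    have hRzero : R = 0 := by
      by_cases hR0 : R = 0
      · exact hR0
      · have hdegR : R.totalDegree ≤ d := by
          have := totalDegree_factor (c := c) hR0
          rw [← hQ] at this
          omega
        refine IH (fun i => a i.castSucc) (fun i j hij => ?_) R hdegR ?_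
        · exact Fin.castSucc_injective _ (ha hij)
        · intro i j hij
          have h0 := hvan i.castSucc j.castSucc (by simpa using hij)
          rw [hQ, map_mul] at h0
          have hx : MvPolynomial.eval ![a i.castSucc, a j.castSucc]
              (MvPolynomial.X 0 - MvPolynomial.C c) = a i.castSucc - c := by
            simp
          rw [hx] at h0
          have hnz : a i.castSucc - c ≠ 0 :=
            sub_ne_zero.mpr (fun h => (Fin.castSucc_lt_last i).ne (ha h))
          exact (mul_eq_zero.mp h0).resolve_left hnz
    rw [hQ, hRzero, mul_zero]

end Stmt2Aux

/-- If `a₀,…,a_d` are `d+1` distinct elements of a field `k` and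
`Q(x,y)` is a polynomial of total degree at most `d` vanishing at every point
`(aᵢ, aⱼ)` with `0 ≤ j ≤ i ≤ d`, then `Q = 0`. -/
theorem stmt_2 {k : Type*} [Field k] (d : ℕ) (a : Fin (d + 1) → k)
    (hinj : Function.Injective a)
    (Q : MvPolynomial (Fin 2) k) (hdeg : Q.totalDegree ≤ d)
    (hvan : ∀ i j : Fin (d + 1), j ≤ i → MvPolynomial.eval ![a i, a j] Q = 0) :
    Q = 0 := by
  exact Stmt2Aux.key d a hinj Q hdeg hvan
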